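/- Let v ∈ ℝ and decompose v = v⁺ + v⁻ with v⁺ = max(v,0), v⁻ = min(v,0). Let a, b ≥ 0 and define the upwind product F = v⁺ a + v⁻ b. Then F = v·a + v⁻ (b − a) = v·b + v⁺ (a − b), and |F| ≤ |v| max(a,b). Moreover if a, b > 0 then F (log b − log a) ≤ v L(a,b)(log b − log a) = v(b − a), where L is the logarithmic mean. -/

import Mathlib

open Real

lemma aux_log_bounds (a b : ℝ) (ha : 0 < a) (hb : 0 < b) :
    a * (Real.log b - Real.log a) ≤ b - a ∧ b - a ≤ b * (Real.log b - Real.log a) := by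
  constructor
  · have h := Real.log_le_sub_one_of_pos (show 0 < b / a by positivity)
    rw [Real.log_div (ne_of_gt hb) (ne_of_gt ha)] at h
    calc a * (Real.log b - Real.log a) ≤ a * (b / a - 1) := by nlinarith
      _ = b - a := by field_simp
  · have h := Real.log_le_sub_one_of_pos (show 0 < a / b by positivity)
    rw [Real.log_div (ne_of_gt ha) (ne_of_gt hb)] at h
    calc b - a = -(b * (a / b - 1)) := by field_simp; ring
      _ ≤ -(b * (Real.log a - Real.log b)) := by nlinarith
      _ = b * (Real.log b - Real.log a) := by ring

/-- Algebraic identities for the upwind flux `F = v⁺a + v⁻b` with `v⁺ = max(v,0)`,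
`v⁻ = min(v,0)` and nonnegative states `a, b`:
`F = v·a + v⁻(b − a)`, `F = v·b + v⁺(a − b)`, `|F| ≤ |v|·max(a,b)`; moreover if
`a, b > 0` then `F(log b − log a) ≤ v L(a,b)(log b − log a) = v(b − a)`,
where `L` is the logarithmic mean. -/
theorem stmt_18 (v a b F L : ℝ) (ha : 0 ≤ a) (hb : 0 ≤ b)
    (hF : F = max v 0 * a + min v 0 * b)
    (hL : L = if a = b then a else (b - a) / (Real.log b - Real.log a)) :
    F = v * a + min v 0 * (b - a) ∧
    F = v * b + max v 0 * (a - b) ∧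
    |F| ≤ |v| * max a b ∧
    (0 < a → 0 < b →
      F * (Real.log b - Real.log a) ≤ v * L * (Real.log b - Real.log a) ∧
      v * L * (Real.log b - Real.log a) = v * (b - a)) := by
  have hsum : max v 0 + min v 0 = v := by rw [max_add_min]; ring
  have hmaxnn : 0 ≤ max v 0 := le_max_right v 0
  have hminnp : min v 0 ≤ 0 := min_le_right v 0
  refine ⟨by rw [hF]; nlinarith [hsum], by rw [hF]; nlinarith [hsum], ?_, ?_⟩
  · have habs : |v| = max v 0 - min v 0 := by
      rcases le_or_gt 0 v with h | h
      · rw [abs_of_nonneg h, max_eq_left h, min_eq_right h]; ring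
      · rw [abs_of_neg h, max_eq_right h.le, min_eq_left h.le]; ring
    have hm1 : a ≤ max a b := le_max_left a b
    have hm2 : b ≤ max a b := le_max_right a b
    rw [hF, habs]
    calc |max v 0 * a + min v 0 * b| ≤ |max v 0 * a| + |min v 0 * b| := abs_add_le _ _
      _ = max v 0 * a + (-(min v 0)) * b := by
          rw [abs_mul, abs_mul, abs_of_nonneg hmaxnn, abs_of_nonneg ha,
            abs_of_nonpos hminnp, abs_of_nonneg hb]
      _ ≤ (max v 0 - min v 0) * max a b := by nlinarith
  · intro hap hbp
    obtain ⟨h1, h2⟩ := aux_log_bounds a b hap hbp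
    have heq : v * L * (Real.log b - Real.log a) = v * (b - a) := by
      by_cases hab : a = b
      · simp [hL, hab]
      · rw [hL, if_neg hab]
        have hne : Real.log b - Real.log a ≠ 0 := by
          rcases lt_or_gt_of_ne hab with h | h
          · exact ne_of_gt (by linarith [Real.log_lt_log hap h])
          · exact ne_of_lt (by linarith [Real.log_lt_log hbp h])
        field_simp
    refine ⟨?_, heq⟩
    rw [heq]
    rcases le_or_gt 0 v with hv | hv
    · have : F = v * a := by
        rw [hF, max_eq_left hv, min_eq_right hv]; ring
      rw [this]
      nlinarith
    · have : F = v * b := by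
        rw [hF, max_eq_right hv.le, min_eq_left hv.le]; ring
      rw [this]
      nlinarith
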